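/- The differential graded algebra (ℚ[t] ⊗ Λ(x,y,z), D₁) with |t| = 2, |x| = 3, |y| = 5, |z| = 7, D₁t = D₁x = D₁y = 0 and D₁z = xy + t⁴ has finite-dimensional cohomology, and the differential graded algebra (ℚ[t] ⊗ Λ(x',y',z'), D₂) with |t| = 2, |x'| = 5, |y'| = 7, |z'| = 11, D₂t = D₂x' = D₂y' = 0 and D₂z' = x'y' + t⁶ has finite-dimensional cohomology; moreover the ℚ[t]-algebra map F with F(x') = xt, F(y') = yt, F(z') = zt² is a map of differential graded algebras (ℚ[t] ⊗ Λ(x',y',z'), D₂) → (ℚ[t] ⊗ Λ(x,y,z), D₁). -/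

import Mathlib

/-!
Framework for Sullivan-type free graded-commutative differential graded
algebras over `ℚ`, and for the rational toral rank of spaces and maps,
following T. Yamaguchi, "Rational toral rank of a map".
-/

/-- Exponent vectors indexing the monomial basis of a free graded-commutative
algebra on generators indexed by `ι` with degrees `deg`: finitely supported
`ℕ`-valued functions whose value on odd-degree (exterior) generators is at
most `1`. -/
def MonIdx (ι : Type) (deg : ι → ℕ) : Type :=
  {e : ι →₀ ℕ // ∀ i, Odd (deg i) → e i ≤ 1}

/-- The total degree of the monomial with exponent vector `e`. -/
def monDeg {ι : Type} (deg : ι → ℕ) (e : MonIdx ι deg) : ℕ :=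
  e.1.sum fun i k => k * deg i

/-- The monomial with exponent vector `e`: the product of the corresponding
powers of the generators `gen`, taken in increasing order of the indices. -/
def monProd {ι : Type} [LinearOrder ι] (deg : ι → ℕ) {A : Type} [Ring A]
    (gen : ι → A) (e : MonIdx ι deg) : A :=
  ((e.1.support.sort (· ≤ ·)).map fun i => gen i ^ e.1 i).prod

/-- A realization of the free graded-commutative `ℚ`-algebra `ΛV` on
generators `gen i` of degree `deg i` (polynomial algebra on the even-degree
generators tensored with the exterior algebra on the odd-degree generators):
the carrier `A` is a `ℚ`-algebra with a grading `grading` in which homogeneous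
elements graded-commute, the ordered monomials in the generators form a
`ℚ`-basis of `A`, and `grading n` is spanned by the monomials of total
degree `n`. -/
structure FGCA0 (ι : Type) [LinearOrder ι] (deg : ι → ℕ)
    (A : Type) [Ring A] [Algebra ℚ A] : Type where
  gen : ι → A
  grading : ℕ → Submodule ℚ A
  one_mem : (1 : A) ∈ grading 0
  mul_mem : ∀ {m n : ℕ} {x y : A}, x ∈ grading m → y ∈ grading n →
      x * y ∈ grading (m + n)
  gen_mem : ∀ i, gen i ∈ grading (deg i)
  gcomm : ∀ {m n : ℕ} (x y : A), x ∈ grading m → y ∈ grading n →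
      x * y = ((-1 : ℚ) ^ (m * n)) • (y * x)
  basis : Module.Basis (MonIdx ι deg) ℚ A
  basis_eq : ∀ e, basis e = monProd deg gen e
  grading_eq : ∀ n, grading n =
      Submodule.span ℚ {x : A | ∃ e : MonIdx ι deg, monDeg deg e = n ∧ x = monProd deg gen e}

/-- `D` is a degree `+1` derivation of `M`: it raises degrees by one and
satisfies the graded Leibniz rule. -/
def IsDegOneDerivation {ι : Type} [LinearOrder ι] {deg : ι → ℕ} {A : Type}
    [Ring A] [Algebra ℚ A] (M : FGCA0 ι deg A) (D : A →ₗ[ℚ] A) : Prop :=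
  (∀ (n : ℕ) (x : A), x ∈ M.grading n → D x ∈ M.grading (n + 1)) ∧
  (∀ (n : ℕ) (x y : A), x ∈ M.grading n →
      D (x * y) = D x * y + ((-1 : ℚ) ^ n) • (x * D y))

/-- `D` is a differential on `M`: a degree `+1` derivation with `D ∘ D = 0`. -/
def IsDifferential {ι : Type} [LinearOrder ι] {deg : ι → ℕ} {A : Type}
    [Ring A] [Algebra ℚ A] (M : FGCA0 ι deg A) (D : A →ₗ[ℚ] A) : Prop :=
  IsDegOneDerivation M D ∧ ∀ x, D (D x) = 0

/-- A realization of a free graded-commutative (Sullivan-type) differential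
graded `ℚ`-algebra `(ΛV, D)` on generators of degrees `deg`. -/
structure FGCA (ι : Type) [LinearOrder ι] (deg : ι → ℕ)
    (A : Type) [Ring A] [Algebra ℚ A] extends FGCA0 ι deg A where
  D : A →ₗ[ℚ] A
  isDifferential : IsDifferential toFGCA0 D

/-- The total cohomology `ker D / im D` of a differential `D` is a
finite-dimensional `ℚ`-vector space, i.e. `dim H^*(A, D) < ∞`. -/
def FiniteCohomology {A : Type} [Ring A] [Algebra ℚ A] (D : A →ₗ[ℚ] A) : Prop :=
  FiniteDimensional ℚ
    (↥(LinearMap.ker D) ⧸ (LinearMap.range D).comap (LinearMap.ker D).subtype)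


/-! ### Auxiliary machinery -/

set_option linter.unusedSectionVars false

lemma prod_map_eq_of_sublist {ι : Type} {A : Type} [Monoid A] (f : ι → A)
    {l₁ l₂ : List ι} (h : List.Sublist l₁ l₂) (hn : l₂.Nodup)
    (h1 : ∀ i ∈ l₂, i ∉ l₁ → f i = 1) : (l₂.map f).prod = (l₁.map f).prod := by
  induction h with
  | slnil => rfl
  | cons a h ih =>
    rename_i t₁ t₂
    have hn' : t₂.Nodup := (List.nodup_cons.1 hn).2
    have ha : a ∉ t₂ := (List.nodup_cons.1 hn).1
    have : f a = 1 := h1 a List.mem_cons_self (fun hc => ha (h.subset hc))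
    simp only [List.map_cons, List.prod_cons, this, one_mul]
    exact ih hn' (fun i hi hni => h1 i (List.mem_cons_of_mem _ hi) hni)
  | cons_cons a h ih =>
    rename_i t₁ t₂
    have hn' : t₂.Nodup := (List.nodup_cons.1 hn).2
    have ha : a ∉ t₂ := (List.nodup_cons.1 hn).1
    simp only [List.map_cons, List.prod_cons]
    rw [ih hn' (fun i hi hni => h1 i (List.mem_cons_of_mem _ hi)
      (fun hc => by
        rcases List.mem_cons.1 hc with rfl | hc
        · exact ha hi
        · exact hni hc))]

lemma monProd_eq {deg : Fin 4 → ℕ} {A : Type} [Ring A] (gen : Fin 4 → A)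
    (e : MonIdx (Fin 4) deg) :
    monProd deg gen e =
      gen 0 ^ e.1 0 * gen 1 ^ e.1 1 * gen 2 ^ e.1 2 * gen 3 ^ e.1 3 := by
  have hsub : List.Sublist (e.1.support.sort (· ≤ ·)) [0, 1, 2, 3] := by
    apply List.sublist_of_subperm_of_pairwise (r := (· ≤ ·))
    · exact (Finset.sort_nodup _ _).subperm (by
        intro i _
        have : i ∈ ([0,1,2,3] : List (Fin 4)) := by fin_cases i <;> simp
        exact this)
    · exact Finset.pairwise_sort _ _
    · decide
  have := prod_map_eq_of_sublist (fun i => gen i ^ e.1 i) hsub (by decide)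
    (fun i _ hni => by
      have : e.1 i = 0 := by
        by_contra hne
        exact hni (by simpa [Finset.mem_sort] using Finsupp.mem_support_iff.2 hne)
      simp [this])
  rw [monProd, ← this]
  simp [mul_assoc]

def bN (b : Bool) : ℕ := if b then 1 else 0
@[simp] lemma bN_true : bN true = 1 := rfl
@[simp] lemma bN_false : bN false = 0 := rfl

section IndexEquiv
variable {deg : Fin 4 → ℕ}
variable (h0 : ¬ Odd (deg 0)) (h1 : Odd (deg 1)) (h2 : Odd (deg 2)) (h3 : Odd (deg 3))

noncomputable def ef (a : ℕ) (b c d : Bool) : Fin 4 →₀ ℕ :=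
  Finsupp.equivFunOnFinite.symm ![a, bN b, bN c, bN d]

@[simp] lemma ef_apply (a : ℕ) (b c d : Bool) (i : Fin 4) :
    ef a b c d i = ![a, bN b, bN c, bN d] i := rfl

noncomputable def Eidx (a : ℕ) (b c d : Bool) : MonIdx (Fin 4) deg :=
  ⟨ef a b c d, by
    intro i hi
    fin_cases i
    · exact absurd hi h0
    · cases b <;> simp [ef, bN]
    · cases c <;> simp [ef, bN]
    · cases d <;> simp [ef, bN]⟩

noncomputable def Eequiv : (ℕ × Bool × Bool × Bool) ≃ MonIdx (Fin 4) deg where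
  toFun p := Eidx h0 p.1 p.2.1 p.2.2.1 p.2.2.2
  invFun e := (e.1 0, decide (e.1 1 = 1), decide (e.1 2 = 1), decide (e.1 3 = 1))
  left_inv p := by
    obtain ⟨a, b, c, d⟩ := p
    simp only [Eidx, ef_apply]
    cases b <;> cases c <;> cases d <;> simp [bN]
  right_inv e := by
    have k1 : e.1 1 ≤ 1 := e.2 1 h1
    have k2 : e.1 2 ≤ 1 := e.2 2 h2
    have k3 : e.1 3 ≤ 1 := e.2 3 h3
    apply Subtype.ext
    apply Finsupp.ext
    intro i
    fin_cases i
    · simp [Eidx]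
    · simp only [Eidx, ef_apply]
      rcases Nat.le_one_iff_eq_zero_or_eq_one.mp k1 with h | h <;> simp [bN, h]
    · simp only [Eidx, ef_apply]
      rcases Nat.le_one_iff_eq_zero_or_eq_one.mp k2 with h | h <;> simp [bN, h]
    · simp only [Eidx, ef_apply]
      rcases Nat.le_one_iff_eq_zero_or_eq_one.mp k3 with h | h <;> simp [bN, h]
end IndexEquiv

section Words
variable {A : Type} [Ring A]
variable (t x y z : A)

lemma swap' {u v : A} (h : u * v = -(v * u)) (r : A) : u * (v * r) = -(v * (u * r)) := by
  rw [← mul_assoc, h, ← mul_assoc, neg_mul]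
lemma sq0' {u : A} (h : u * u = 0) (r : A) : u * (u * r) = 0 := by
  rw [← mul_assoc, h, zero_mul]
lemma tmob' {u : A} (h : ∀ n : ℕ, u * t ^ n = t ^ n * u) (n : ℕ) (r : A) :
    u * (t ^ n * r) = t ^ n * (u * r) := by
  rw [← mul_assoc, h, mul_assoc]
lemma htt (m n : ℕ) : t ^ m * t ^ n = t ^ (m + n) := (pow_add t m n).symm
lemma htt' (m n : ℕ) (r : A) : t ^ m * (t ^ n * r) = t ^ (m + n) * r := by
  rw [← mul_assoc, htt]

def wm (a : ℕ) (b c d : Bool) : A :=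
  ((t ^ a * x ^ bN b) * y ^ bN c) * z ^ bN d

def sgn (c d b' c' : Bool) : ℚ :=
  (-1 : ℚ) ^ (bN b' * (bN c + bN d) + bN c' * bN d)

lemma mulw [Algebra ℚ A] (hxx : x * x = 0) (hyy : y * y = 0) (hzz : z * z = 0)
    (hyx : y * x = -(x * y)) (hzx : z * x = -(x * z)) (hzy : z * y = -(y * z))
    (hxt : ∀ n : ℕ, x * t ^ n = t ^ n * x)
    (hyt : ∀ n : ℕ, y * t ^ n = t ^ n * y)
    (hzt : ∀ n : ℕ, z * t ^ n = t ^ n * z)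
    (a a' : ℕ) (b c d b' c' d' : Bool) :
    wm t x y z a b c d * wm t x y z a' b' c' d' =
      sgn c d b' c' •
      (if (b && b') || (c && c') || (d && d') then 0
       else wm t x y z (a + a') (b || b') (c || c') (d || d')) := by
  rcases b <;> rcases c <;> rcases d <;> rcases b' <;> rcases c' <;> rcases d' <;>
  · simp only [wm, sgn, bN_true, bN_false, pow_one, pow_zero, mul_one, one_mul,
      mul_assoc, Bool.and_true, Bool.and_false, Bool.or_true, Bool.or_false,
      Bool.true_or, Bool.false_or, Bool.true_and, Bool.false_and,
      if_true, if_false, Bool.true_eq_false, Bool.false_eq_true]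
    simp only [tmob' t hxt, tmob' t hyt, tmob' t hzt, htt' t, htt,
      swap' hyx, swap' hzx, swap' hzy, sq0' hxx, sq0' hyy, sq0' hzz,
      hxx, hyy, hzz, hyx, hzx, hzy, hxt, hyt, hzt,
      mul_neg, neg_mul, mul_zero, zero_mul, neg_zero, neg_neg]
    norm_num
end Words

section Structure
variable {deg : Fin 4 → ℕ} {A : Type} [Ring A] [Algebra ℚ A]
variable (M : FGCA0 (Fin 4) deg A)
variable (h0 : ¬ Odd (deg 0)) (h1 : Odd (deg 1)) (h2 : Odd (deg 2)) (h3 : Odd (deg 3))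

lemma gpow_mem (i : Fin 4) (n : ℕ) : M.gen i ^ n ∈ M.grading (n * deg i) := by
  induction n with
  | zero => simpa using M.one_mem
  | succ n ih =>
    have := M.mul_mem ih (M.gen_mem i)
    rw [← pow_succ] at this
    convert this using 2
    ring

lemma sq_zero {i : Fin 4} (hi : Odd (deg i)) : M.gen i * M.gen i = 0 := by
  have h := M.gcomm (M.gen i) (M.gen i) (M.gen_mem i) (M.gen_mem i)
  rw [(hi.mul hi).neg_one_pow, neg_one_smul] at h
  have hadd : M.gen i * M.gen i + M.gen i * M.gen i = 0 :=
    add_eq_zero_iff_eq_neg.mpr h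
  have h2 : (2 : ℚ) • (M.gen i * M.gen i) = 0 := by rw [two_smul]; exact hadd
  have := smul_eq_zero.mp h2
  simpa using this

lemma anticomm {i j : Fin 4} (hi : Odd (deg i)) (hj : Odd (deg j)) :
    M.gen j * M.gen i = -(M.gen i * M.gen j) := by
  have h := M.gcomm (M.gen j) (M.gen i) (M.gen_mem j) (M.gen_mem i)
  rw [(hj.mul hi).neg_one_pow, neg_one_smul] at h
  exact h

include h0 h1 h2 h3

lemma tpow_comm {u : A} {n : ℕ} (hu : u ∈ M.grading n) (m : ℕ) :
    u * M.gen 0 ^ m = M.gen 0 ^ m * u := by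
  have h := M.gcomm u (M.gen 0 ^ m) hu (gpow_mem M 0 m)
  rw [h]
  have he : Even (n * (m * deg 0)) :=
    (Nat.not_odd_iff_even.mp h0).mul_left m |>.mul_left n
  rw [he.neg_one_pow, one_smul]

/-- The reindexed basis. -/
noncomputable def Bb : Module.Basis (ℕ × Bool × Bool × Bool) ℚ A :=
  M.basis.reindex (Eequiv h0 h1 h2 h3).symm

lemma Bb_eq (a : ℕ) (b c d : Bool) :
    Bb M h0 h1 h2 h3 (a, b, c, d) = wm (M.gen 0) (M.gen 1) (M.gen 2) (M.gen 3) a b c d := by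
  rw [Bb, Module.Basis.reindex_apply, Equiv.symm_symm]
  show M.basis (Eidx h0 a b c d) = _
  rw [M.basis_eq, monProd_eq]
  simp only [Eidx, ef_apply, wm]
  norm_num
  rfl

-- degree of a word
def ds (deg : Fin 4 → ℕ) (a : ℕ) (b c d : Bool) : ℕ :=
  a * deg 0 + bN b * deg 1 + bN c * deg 2 + bN d * deg 3

lemma wm_mem (a : ℕ) (b c d : Bool) :
    wm (M.gen 0) (M.gen 1) (M.gen 2) (M.gen 3) a b c d ∈ M.grading (ds deg a b c d) :=
  M.mul_mem (M.mul_mem (M.mul_mem (gpow_mem M 0 a) (gpow_mem M 1 (bN b)))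
    (gpow_mem M 2 (bN c))) (gpow_mem M 3 (bN d))

lemma ds_neg_one_pow (a : ℕ) (b c : Bool) :
    ((-1 : ℚ)) ^ (ds deg a b c false) = (-1 : ℚ) ^ (bN b + bN c) := by
  have he : Even (a * deg 0) := (Nat.not_odd_iff_even.mp h0).mul_left a
  rw [ds]
  simp only [bN_false, zero_mul, add_zero]
  rw [pow_add, pow_add, he.neg_one_pow, one_mul, pow_add]
  congr 1
  · cases b
    · simp
    · simpa using h1.neg_one_pow
  · cases c
    · simp
    · simpa using h2.neg_one_pow
end Structure

section Diff
variable {deg : Fin 4 → ℕ} {A : Type} [Ring A] [Algebra ℚ A]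
variable (M : FGCA (Fin 4) deg A)
variable (h0 : ¬ Odd (deg 0)) (h1 : Odd (deg 1)) (h2 : Odd (deg 2)) (h3 : Odd (deg 3))
variable (k : ℕ)
variable (hDt : M.D (M.gen 0) = 0) (hDx : M.D (M.gen 1) = 0) (hDy : M.D (M.gen 2) = 0)
variable (hDz : M.D (M.gen 3) = M.gen 1 * M.gen 2 + M.gen 0 ^ k)

lemma D_one : M.D 1 = 0 := by
  have h := M.isDifferential.1.2 0 1 1 M.one_mem
  simp only [mul_one, one_mul, pow_zero, one_smul] at h
  exact add_eq_left.mp h.symm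

lemma D_mul_zero {u v : A} {n : ℕ} (hu : u ∈ M.toFGCA0.grading n)
    (hDu : M.D u = 0) (hDv : M.D v = 0) : M.D (u * v) = 0 := by
  rw [M.isDifferential.1.2 n u v hu, hDu, hDv, zero_mul, mul_zero, smul_zero, add_zero]

lemma D_pow_zero {i : Fin 4} (hDi : M.D (M.gen i) = 0) (n : ℕ) :
    M.D (M.gen i ^ n) = 0 := by
  induction n with
  | zero => simpa using D_one M
  | succ n ih =>
    rw [pow_succ]
    exact D_mul_zero M (gpow_mem M.toFGCA0 i n) ih hDi

include hDt hDx hDy in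
lemma Dw_false (a : ℕ) (b c : Bool) :
    M.D (wm (M.gen 0) (M.gen 1) (M.gen 2) (M.gen 3) a b c false) = 0 := by
  rw [wm]
  simp only [bN_false, pow_zero, mul_one]
  exact D_mul_zero M
    (M.mul_mem (gpow_mem M.toFGCA0 0 a) (gpow_mem M.toFGCA0 1 (bN b)))
    (D_mul_zero M (gpow_mem M.toFGCA0 0 a) (D_pow_zero M hDt a) (D_pow_zero M hDx (bN b)))
    (D_pow_zero M hDy (bN c))

include h0 h1 h2 h3 hDt hDx hDy hDz

lemma Dw_true (a : ℕ) (b c : Bool) :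
    M.D (wm (M.gen 0) (M.gen 1) (M.gen 2) (M.gen 3) a b c true) =
      (-1 : ℚ) ^ (bN b + bN c) •
        (wm (M.gen 0) (M.gen 1) (M.gen 2) (M.gen 3) a b c false *
          (M.gen 1 * M.gen 2 + M.gen 0 ^ k)) := by
  set T := M.gen 0; set X := M.gen 1; set Y := M.gen 2; set Z := M.gen 3
  have hmem : wm T X Y Z a b c false ∈ M.toFGCA0.grading (ds deg a b c false) :=
    wm_mem M.toFGCA0 h0 h1 h2 h3 a b c false
  have hw : wm T X Y Z a b c true = wm T X Y Z a b c false * Z := by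
    rw [wm, wm]
    simp [mul_assoc]
  rw [hw, M.isDifferential.1.2 _ _ _ hmem, Dw_false M hDt hDx hDy, zero_mul, zero_add,
    hDz, ds_neg_one_pow h0 h1 h2 h3]

-- the four explicit values
lemma Dw00 (a : ℕ) :
    M.D (wm (M.gen 0) (M.gen 1) (M.gen 2) (M.gen 3) a false false true) =
      wm (M.gen 0) (M.gen 1) (M.gen 2) (M.gen 3) a true true false +
      wm (M.gen 0) (M.gen 1) (M.gen 2) (M.gen 3) (a + k) false false false := by
  rw [Dw_true M h0 h1 h2 h3 k hDt hDx hDy hDz]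
  simp only [bN_false, bN_true, pow_zero, pow_one, mul_one, add_zero, one_smul, wm]
  rw [mul_add, ← mul_assoc, ← pow_add]

lemma Dw10 (a : ℕ) :
    M.D (wm (M.gen 0) (M.gen 1) (M.gen 2) (M.gen 3) a true false true) =
      -(wm (M.gen 0) (M.gen 1) (M.gen 2) (M.gen 3) (a + k) true false false) := by
  have Hxx := sq_zero M.toFGCA0 h1
  have Hxt : ∀ n, M.gen 1 * M.gen 0 ^ n = M.gen 0 ^ n * M.gen 1 :=
    fun n => tpow_comm M.toFGCA0 h0 h1 h2 h3 (M.gen_mem 1) n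
  rw [Dw_true M h0 h1 h2 h3 k hDt hDx hDy hDz]
  simp only [bN_true, bN_false, pow_one, pow_zero, mul_one, one_mul, wm]
  rw [mul_add]
  rw [show M.gen 0 ^ a * M.gen 1 * (M.gen 1 * M.gen 2) = 0 by
    rw [mul_assoc, sq0' Hxx, mul_zero]]
  rw [zero_add, mul_assoc, Hxt, ← mul_assoc, htt]
  norm_num

lemma Dw01 (a : ℕ) :
    M.D (wm (M.gen 0) (M.gen 1) (M.gen 2) (M.gen 3) a false true true) =
      -(wm (M.gen 0) (M.gen 1) (M.gen 2) (M.gen 3) (a + k) false true false) := by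
  have Hyy := sq_zero M.toFGCA0 h2
  have Hyx := anticomm M.toFGCA0 h1 h2
  have Hyt : ∀ n, M.gen 2 * M.gen 0 ^ n = M.gen 0 ^ n * M.gen 2 :=
    fun n => tpow_comm M.toFGCA0 h0 h1 h2 h3 (M.gen_mem 2) n
  rw [Dw_true M h0 h1 h2 h3 k hDt hDx hDy hDz]
  simp only [bN_true, bN_false, pow_one, pow_zero, mul_one, one_mul, wm]
  rw [mul_add]
  rw [show M.gen 0 ^ a * M.gen 2 * (M.gen 1 * M.gen 2) = 0 by
    rw [mul_assoc, swap' Hyx, ← mul_assoc, mul_assoc _ (M.gen 2), Hyy, mul_zero, mul_neg,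
      neg_eq_zero, mul_zero]]
  rw [zero_add, mul_assoc, Hyt, ← mul_assoc, htt]
  norm_num

lemma Dw11 (a : ℕ) :
    M.D (wm (M.gen 0) (M.gen 1) (M.gen 2) (M.gen 3) a true true true) =
      wm (M.gen 0) (M.gen 1) (M.gen 2) (M.gen 3) (a + k) true true false := by
  have Hxx := sq_zero M.toFGCA0 h1
  have Hyx := anticomm M.toFGCA0 h1 h2
  have Hyt : ∀ n, M.gen 2 * M.gen 0 ^ n = M.gen 0 ^ n * M.gen 2 :=
    fun n => tpow_comm M.toFGCA0 h0 h1 h2 h3 (M.gen_mem 2) n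
  have Hxt : ∀ n, M.gen 1 * M.gen 0 ^ n = M.gen 0 ^ n * M.gen 1 :=
    fun n => tpow_comm M.toFGCA0 h0 h1 h2 h3 (M.gen_mem 1) n
  rw [Dw_true M h0 h1 h2 h3 k hDt hDx hDy hDz]
  simp only [bN_true, bN_false, pow_one, pow_zero, mul_one, one_mul, wm]
  rw [mul_add]
  rw [show M.gen 0 ^ a * M.gen 1 * M.gen 2 * (M.gen 1 * M.gen 2) = 0 by
    rw [mul_assoc _ (M.gen 2), swap' Hyx, mul_neg, mul_assoc _ (M.gen 1), sq0' Hxx,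
      mul_zero, neg_zero]]
  rw [zero_add, mul_assoc _ (M.gen 2), Hyt, ← mul_assoc, mul_assoc _ (M.gen 1), Hxt,
    ← mul_assoc, htt]
  norm_num
end Diff

section FiniteQuot
variable {A : Type} [Ring A] [Algebra ℚ A]

lemma finite_quot (D : A →ₗ[ℚ] A) (hD2 : ∀ x, D (D x) = 0)
    (S : Set A) (hfin : S.Finite) (hker : ∀ s ∈ S, D s = 0)
    (hle : ∀ v ∈ LinearMap.ker D, v ∈ LinearMap.range D ⊔ Submodule.span ℚ S) :
    FiniteCohomology D := by
  classical
  set K := LinearMap.ker D with hK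
  set p : Submodule ℚ K := (LinearMap.range D).comap K.subtype with hp
  have hLK : Submodule.span ℚ S ≤ K :=
    Submodule.span_le.mpr (fun s hs => LinearMap.mem_ker.mpr (hker s hs))
  have : FiniteDimensional ℚ (Submodule.span ℚ S) := FiniteDimensional.span_of_finite ℚ hfin
  refine Module.Finite.of_surjective (p.mkQ.comp (Submodule.inclusion hLK)) ?_
  intro q
  obtain ⟨⟨v, hv⟩, rfl⟩ := Submodule.Quotient.mk_surjective p q
  obtain ⟨r, hr, l, hl, heq⟩ := Submodule.mem_sup.mp (hle v hv)
  have hrk : r ∈ K := by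
    obtain ⟨u, rfl⟩ := hr
    exact LinearMap.mem_ker.mpr (hD2 u)
  have hlk : l ∈ K := hLK hl
  refine ⟨⟨l, hl⟩, ?_⟩
  have hsplit : (⟨v, hv⟩ : K) = ⟨r, hrk⟩ + ⟨l, hlk⟩ := by
    apply Subtype.ext
    simp [heq.symm]
  show p.mkQ ⟨l, hlk⟩ = Submodule.Quotient.mk ⟨v, hv⟩
  rw [hsplit, Submodule.Quotient.mk_add]
  have hz : (Submodule.Quotient.mk ⟨r, hrk⟩ : K ⧸ p) = 0 :=
    (Submodule.Quotient.mk_eq_zero p).mpr (Submodule.mem_comap.mpr hr)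
  rw [hz, zero_add, Submodule.mkQ_apply]
end FiniteQuot

section Kernel
variable {deg : Fin 4 → ℕ} {A : Type} [Ring A] [Algebra ℚ A]
variable (M : FGCA (Fin 4) deg A)
variable (h0 : ¬ Odd (deg 0)) (h1 : Odd (deg 1)) (h2 : Odd (deg 2)) (h3 : Odd (deg 3))
variable (k : ℕ)
variable (hDt : M.D (M.gen 0) = 0) (hDx : M.D (M.gen 1) = 0) (hDy : M.D (M.gen 2) = 0)
variable (hDz : M.D (M.gen 3) = M.gen 1 * M.gen 2 + M.gen 0 ^ k)

/-- contracting homotopy-ish left inverse on the `z`-part. -/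
noncomputable def Gmap : A →ₗ[ℚ] A :=
  (Bb M.toFGCA0 h0 h1 h2 h3).constr ℚ (fun p =>
    match p with
    | (a, false, false, false) =>
        (if k ≤ a then Bb M.toFGCA0 h0 h1 h2 h3 (a - k, false, false, true) else 0) -
        (if 2 * k ≤ a then Bb M.toFGCA0 h0 h1 h2 h3 (a - 2 * k, true, true, true) else 0)
    | (a, true, false, false) =>
        if k ≤ a then -(Bb M.toFGCA0 h0 h1 h2 h3 (a - k, true, false, true)) else 0
    | (a, false, true, false) =>
        if k ≤ a then -(Bb M.toFGCA0 h0 h1 h2 h3 (a - k, false, true, true)) else 0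
    | (a, true, true, false) =>
        if k ≤ a then Bb M.toFGCA0 h0 h1 h2 h3 (a - k, true, true, true) else 0
    | (_, _, _, true) => 0)

include hDt hDx hDy hDz in
lemma GD (a : ℕ) (b c : Bool) :
    Gmap M h0 h1 h2 h3 k (M.D (Bb M.toFGCA0 h0 h1 h2 h3 (a, b, c, true))) =
      Bb M.toFGCA0 h0 h1 h2 h3 (a, b, c, true) := by
  set b4 := Bb M.toFGCA0 h0 h1 h2 h3 with hb4
  rcases b <;> rcases c
  · -- b = false, c = false
    rw [hb4, Bb_eq, Dw00 M h0 h1 h2 h3 k hDt hDx hDy hDz,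
      ← Bb_eq M.toFGCA0 h0 h1 h2 h3 a true true false,
      ← Bb_eq M.toFGCA0 h0 h1 h2 h3 (a + k) false false false,
      map_add, Gmap, Module.Basis.constr_basis, Module.Basis.constr_basis]
    have e1 : k ≤ a + k := Nat.le_add_left k a
    have e2 : 2 * k ≤ a + k ↔ k ≤ a := by omega
    have e3 : a + k - k = a := by omega
    have e4 : a + k - 2 * k = a - k := by omega
    simp only [e3, e4, if_pos e1, e2]
    by_cases h : k ≤ a <;> simp [h, Bb_eq M.toFGCA0 h0 h1 h2 h3]
  · -- b = false, c = true
    rw [hb4, Bb_eq, Dw01 M h0 h1 h2 h3 k hDt hDx hDy hDz,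
      ← Bb_eq M.toFGCA0 h0 h1 h2 h3 (a + k) false true false,
      map_neg, Gmap, Module.Basis.constr_basis]
    have e1 : k ≤ a + k := Nat.le_add_left k a
    have e3 : a + k - k = a := by omega
    simp [e3, if_pos e1, Bb_eq M.toFGCA0 h0 h1 h2 h3]
  · -- b = true, c = false
    rw [hb4, Bb_eq, Dw10 M h0 h1 h2 h3 k hDt hDx hDy hDz,
      ← Bb_eq M.toFGCA0 h0 h1 h2 h3 (a + k) true false false,
      map_neg, Gmap, Module.Basis.constr_basis]
    have e1 : k ≤ a + k := Nat.le_add_left k a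
    have e3 : a + k - k = a := by omega
    simp [e3, if_pos e1, Bb_eq M.toFGCA0 h0 h1 h2 h3]
  · -- b = true, c = true
    rw [hb4, Bb_eq, Dw11 M h0 h1 h2 h3 k hDt hDx hDy hDz,
      ← Bb_eq M.toFGCA0 h0 h1 h2 h3 (a + k) true true false,
      Gmap, Module.Basis.constr_basis]
    have e1 : k ≤ a + k := Nat.le_add_left k a
    have e3 : a + k - k = a := by omega
    simp [e3, if_pos e1, Bb_eq M.toFGCA0 h0 h1 h2 h3]

/-- The finite spanning set for cohomology. -/
def Sset : Set A :=
  (fun p : ℕ × Bool × Bool =>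
    wm (M.gen 0) (M.gen 1) (M.gen 2) (M.gen 3) p.1 p.2.1 p.2.2 false) ''
    (Set.Iio (2 * k) ×ˢ (Set.univ : Set (Bool × Bool)))

include h0 h1 h2 h3 hDt hDx hDy hDz in
lemma w_false_mem (a : ℕ) (b c : Bool) :
    wm (M.gen 0) (M.gen 1) (M.gen 2) (M.gen 3) a b c false ∈
      LinearMap.range M.D ⊔ Submodule.span ℚ (Sset M k) := by
  by_cases ha : a < 2 * k
  · apply Submodule.mem_sup_right
    apply Submodule.subset_span
    exact ⟨(a, b, c), ⟨ha, Set.mem_univ _⟩, rfl⟩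
  · push_neg at ha
    have hka : k ≤ a := by omega
    apply Submodule.mem_sup_left
    rcases b <;> rcases c
    · -- (false, false) : w a = D (w (a-k) ff ff tt) - D (w (a-2k) tt tt tt)
      refine ⟨wm (M.gen 0) (M.gen 1) (M.gen 2) (M.gen 3) (a - k) false false true -
        wm (M.gen 0) (M.gen 1) (M.gen 2) (M.gen 3) (a - 2 * k) true true true, ?_⟩
      rw [map_sub, Dw00 M h0 h1 h2 h3 k hDt hDx hDy hDz,
        Dw11 M h0 h1 h2 h3 k hDt hDx hDy hDz]
      have e1 : a - k + k = a := by omega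
      have e2 : a - 2 * k + k = a - k := by omega
      rw [e1, e2]
      abel
    · refine ⟨-(wm (M.gen 0) (M.gen 1) (M.gen 2) (M.gen 3) (a - k) false true true), ?_⟩
      rw [map_neg, Dw01 M h0 h1 h2 h3 k hDt hDx hDy hDz, neg_neg]
      rw [show a - k + k = a by omega]
    · refine ⟨-(wm (M.gen 0) (M.gen 1) (M.gen 2) (M.gen 3) (a - k) true false true), ?_⟩
      rw [map_neg, Dw10 M h0 h1 h2 h3 k hDt hDx hDy hDz, neg_neg]
      rw [show a - k + k = a by omega]
    · refine ⟨wm (M.gen 0) (M.gen 1) (M.gen 2) (M.gen 3) (a - k) true true true, ?_⟩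
      rw [Dw11 M h0 h1 h2 h3 k hDt hDx hDy hDz]
      rw [show a - k + k = a by omega]

include h0 h1 h2 h3 hDt hDx hDy hDz in
lemma finite_cohomology_of_relations : FiniteCohomology M.D := by
  classical
  set b4 := Bb M.toFGCA0 h0 h1 h2 h3 with hb4
  apply finite_quot M.D M.isDifferential.2 (Sset M k)
  · exact ((Set.finite_Iio (2 * k)).prod Set.finite_univ).image _
  · rintro s ⟨⟨a, b, c⟩, _, rfl⟩
    exact Dw_false M hDt hDx hDy a b c
  · intro v hv
    have hDv : M.D v = 0 := LinearMap.mem_ker.mp hv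
    set cf := b4.repr v with hcf
    set pr : ℕ × Bool × Bool × Bool → Prop := fun p => p.2.2.2 = true with hpr
    set c1 := cf.filter pr with hc1
    set c0 := cf.filter (fun p => ¬ pr p) with hc0
    set v1 := Finsupp.linearCombination ℚ b4 c1 with hv1
    set v0 := Finsupp.linearCombination ℚ b4 c0 with hv0
    have hsplit : v = v1 + v0 := by
      rw [hv1, hv0, ← map_add, hc1, hc0, Finsupp.filter_pos_add_filter_neg,
        hcf, b4.linearCombination_repr]
    have hDv0 : M.D v0 = 0 := by
      rw [hv0, Finsupp.linearCombination_apply, Finsupp.sum, map_sum]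
      apply Finset.sum_eq_zero
      intro i hi
      have hif : i.2.2.2 = false := by
        rw [hc0, Finsupp.support_filter] at hi
        have := (Finset.mem_filter.mp hi).2
        simpa [hpr] using this
      obtain ⟨a, b, c, d⟩ := i
      simp only at hif
      subst hif
      rw [map_smul, hb4, Bb_eq, Dw_false M hDt hDx hDy, smul_zero]
    have hGDv1 : Gmap M h0 h1 h2 h3 k (M.D v1) = v1 := by
      rw [hv1, Finsupp.linearCombination_apply, Finsupp.sum, map_sum, map_sum]
      apply Finset.sum_congr rfl
      intro i hi
      have hit : i.2.2.2 = true := by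
        rw [hc1, Finsupp.support_filter] at hi
        exact (Finset.mem_filter.mp hi).2
      obtain ⟨a, b, c, d⟩ := i
      simp only at hit
      subst hit
      rw [map_smul, map_smul, GD M h0 h1 h2 h3 k hDt hDx hDy hDz]
    have hDv1 : M.D v1 = 0 := by
      have := hDv
      rw [hsplit, map_add, hDv0, add_zero] at this
      exact this
    have hv1z : v1 = 0 := by
      rw [← hGDv1, hDv1, map_zero]
    rw [hsplit, hv1z, zero_add, hv0, Finsupp.linearCombination_apply, Finsupp.sum]
    apply Submodule.sum_mem
    intro i hi
    apply Submodule.smul_mem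
    have hif : i.2.2.2 = false := by
      rw [hc0, Finsupp.support_filter] at hi
      have := (Finset.mem_filter.mp hi).2
      simpa [hpr] using this
    obtain ⟨a, b, c, d⟩ := i
    simp only at hif
    subst hif
    rw [hb4, Bb_eq]
    exact w_false_mem M h0 h1 h2 h3 k hDt hDx hDy hDz a b c
end Kernel

section Fmap

lemma bN_or {b b' : Bool} (h : (b && b') = false) : bN (b || b') = bN b + bN b' := by
  rcases b <;> rcases b' <;> simp_all [bN]

/-- product formula in `FGCA0` word form -/
lemma mulw_fgca {deg : Fin 4 → ℕ} {A : Type} [Ring A] [Algebra ℚ A]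
    (M : FGCA0 (Fin 4) deg A)
    (h0 : ¬ Odd (deg 0)) (h1 : Odd (deg 1)) (h2 : Odd (deg 2)) (h3 : Odd (deg 3))
    (a a' : ℕ) (b c d b' c' d' : Bool) :
    wm (M.gen 0) (M.gen 1) (M.gen 2) (M.gen 3) a b c d *
      wm (M.gen 0) (M.gen 1) (M.gen 2) (M.gen 3) a' b' c' d' =
      sgn c d b' c' •
      (if (b && b') || (c && c') || (d && d') then 0
       else wm (M.gen 0) (M.gen 1) (M.gen 2) (M.gen 3) (a + a') (b || b') (c || c') (d || d')) :=
  mulw _ _ _ _ (sq_zero M h1) (sq_zero M h2) (sq_zero M h3)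
    (anticomm M h1 h2) (anticomm M h1 h3) (anticomm M h2 h3)
    (fun n => tpow_comm M h0 h1 h2 h3 (M.gen_mem 1) n)
    (fun n => tpow_comm M h0 h1 h2 h3 (M.gen_mem 2) n)
    (fun n => tpow_comm M h0 h1 h2 h3 (M.gen_mem 3) n)
    a a' b c d b' c' d'

lemma exists_F {degM degN : Fin 4 → ℕ} {A B : Type}
    [Ring A] [Algebra ℚ A] [Ring B] [Algebra ℚ B]
    (M : FGCA (Fin 4) degM A) (N : FGCA (Fin 4) degN B)
    (m0 : ¬ Odd (degM 0)) (m1 : Odd (degM 1)) (m2 : Odd (degM 2)) (m3 : Odd (degM 3))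
    (n0 : ¬ Odd (degN 0)) (n1 : Odd (degN 1)) (n2 : Odd (degN 2)) (n3 : Odd (degN 3))
    (kM : ℕ)
    (hMt : M.D (M.gen 0) = 0) (hMx : M.D (M.gen 1) = 0) (hMy : M.D (M.gen 2) = 0)
    (hMz : M.D (M.gen 3) = M.gen 1 * M.gen 2 + M.gen 0 ^ kM)
    (hNt : N.D (N.gen 0) = 0) (hNx : N.D (N.gen 1) = 0) (hNy : N.D (N.gen 2) = 0)
    (hNz : N.D (N.gen 3) = N.gen 1 * N.gen 2 + N.gen 0 ^ (kM + 2)) :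
    ∃ F : B →ₐ[ℚ] A, F (N.gen 0) = M.gen 0 ∧
      F (N.gen 1) = M.gen 1 * M.gen 0 ∧
      F (N.gen 2) = M.gen 2 * M.gen 0 ∧
      F (N.gen 3) = M.gen 3 * M.gen 0 ^ 2 ∧
      ∀ x, F (N.D x) = M.D (F x) := by
  classical
  set bN4 := Bb N.toFGCA0 n0 n1 n2 n3 with hbN4
  set FL : B →ₗ[ℚ] A := bN4.constr ℚ (fun p =>
    wm (M.gen 0) (M.gen 1) (M.gen 2) (M.gen 3)
      (p.1 + bN p.2.1 + bN p.2.2.1 + 2 * bN p.2.2.2) p.2.1 p.2.2.1 p.2.2.2) with hFL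
  have FB : ∀ (a : ℕ) (b c d : Bool), FL (bN4 (a, b, c, d)) =
      wm (M.gen 0) (M.gen 1) (M.gen 2) (M.gen 3) (a + bN b + bN c + 2 * bN d) b c d := by
    intro a b c d
    rw [hFL, Module.Basis.constr_basis]
  have bN4_eq : ∀ (a : ℕ) (b c d : Bool), bN4 (a, b, c, d) =
      wm (N.gen 0) (N.gen 1) (N.gen 2) (N.gen 3) a b c d :=
    fun a b c d => Bb_eq N.toFGCA0 n0 n1 n2 n3 a b c d
  -- multiplicativity on basis vectors
  have key : ∀ p q : ℕ × Bool × Bool × Bool, FL (bN4 p * bN4 q) = FL (bN4 p) * FL (bN4 q) := by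
    rintro ⟨a, b, c, d⟩ ⟨a', b', c', d'⟩
    rw [FB, FB, bN4_eq a b c d, bN4_eq a' b' c' d',
      mulw_fgca N.toFGCA0 n0 n1 n2 n3 a a' b c d b' c' d', map_smul,
      mulw_fgca M.toFGCA0 m0 m1 m2 m3 _ _ b c d b' c' d']
    by_cases hov : ((b && b') || (c && c') || (d && d')) = true
    · rw [if_pos hov, if_pos hov, map_zero, smul_zero]
    · have hov' := eq_false_of_ne_true hov
      rw [if_neg (by simp [hov']), if_neg (by simp [hov']),
        ← bN4_eq (a + a') (b || b') (c || c') (d || d'), FB]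
      simp only [Bool.or_eq_false_iff] at hov'
      obtain ⟨⟨hbb, hcc⟩, hdd⟩ := hov'
      rw [bN_or hbb, bN_or hcc, bN_or hdd]
      congr 2
      ring
  have hone : FL 1 = 1 := by
    have h1B : (1 : B) = bN4 (0, false, false, false) := by
      rw [bN4_eq]
      simp [wm]
    rw [h1B, FB]
    simp [wm]
  have hmul : ∀ u v : B, FL (u * v) = FL u * FL v := by
    let f1 : B →ₗ[ℚ] B →ₗ[ℚ] A := LinearMap.mk₂ ℚ (fun u v => FL (u * v))
      (fun u u' v => by simp [add_mul]) (fun r u v => by simp [smul_mul_assoc])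
      (fun u v v' => by simp [mul_add]) (fun r u v => by simp [mul_smul_comm])
    let f2 : B →ₗ[ℚ] B →ₗ[ℚ] A := LinearMap.mk₂ ℚ (fun u v => FL u * FL v)
      (fun u u' v => by simp [add_mul]) (fun r u v => by simp [smul_mul_assoc])
      (fun u v v' => by simp [mul_add]) (fun r u v => by simp [mul_smul_comm])
    have hf : f1 = f2 := by
      apply bN4.ext
      intro p
      apply bN4.ext
      intro q
      exact key p q
    intro u v
    exact LinearMap.congr_fun (LinearMap.congr_fun hf u) v
  -- compatibility with differentials on basis vectors
  have keyD : ∀ p : ℕ × Bool × Bool × Bool, FL (N.D (bN4 p)) = M.D (FL (bN4 p)) := by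
    rintro ⟨a, b, c, d⟩
    rcases d
    · rw [FB, bN4_eq, Dw_false N hNt hNx hNy, map_zero]
      simp only [bN_false, mul_zero, add_zero]
      rw [Dw_false M hMt hMx hMy]
    · rw [FB, bN4_eq]
      rcases b <;> rcases c
      · rw [Dw00 N n0 n1 n2 n3 (kM + 2) hNt hNx hNy hNz, map_add,
          ← bN4_eq a true true false, ← bN4_eq (a + (kM + 2)) false false false, FB, FB]
        simp only [bN_false, bN_true, mul_zero, mul_one, add_zero]
        rw [show a + 0 + 0 + 2 * 1 = a + 2 by ring,
          Dw00 M m0 m1 m2 m3 kM hMt hMx hMy hMz]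
        ring_nf
      · rw [Dw01 N n0 n1 n2 n3 (kM + 2) hNt hNx hNy hNz, map_neg,
          ← bN4_eq (a + (kM + 2)) false true false, FB]
        simp only [bN_false, bN_true, mul_zero, mul_one, add_zero]
        rw [show a + 0 + 1 + 2 * 1 = a + 1 + 2 by ring,
          Dw01 M m0 m1 m2 m3 kM hMt hMx hMy hMz]
        ring_nf
      · rw [Dw10 N n0 n1 n2 n3 (kM + 2) hNt hNx hNy hNz, map_neg,
          ← bN4_eq (a + (kM + 2)) true false false, FB]
        simp only [bN_false, bN_true, mul_zero, mul_one, add_zero]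
        rw [show a + 1 + 0 + 2 * 1 = a + 1 + 2 by ring,
          Dw10 M m0 m1 m2 m3 kM hMt hMx hMy hMz]
        ring_nf
      · rw [Dw11 N n0 n1 n2 n3 (kM + 2) hNt hNx hNy hNz,
          ← bN4_eq (a + (kM + 2)) true true false, FB]
        simp only [bN_false, bN_true, mul_zero, mul_one, add_zero]
        rw [show a + 1 + 1 + 2 * 1 = a + 1 + 1 + 2 by ring,
          Dw11 M m0 m1 m2 m3 kM hMt hMx hMy hMz]
        ring_nf
  have hcomm : ∀ v : B, FL (N.D v) = M.D (FL v) := by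
    have : FL.comp N.D = M.D.comp FL := by
      apply bN4.ext
      intro p
      exact keyD p
    intro v
    exact congrFun (congrArg DFunLike.coe this) v
  -- generator values
  have hgen0 : FL (N.gen 0) = M.gen 0 := by
    rw [show N.gen 0 = bN4 (1, false, false, false) by rw [bN4_eq]; simp [wm], FB]
    simp [wm]
  have hgen1 : FL (N.gen 1) = M.gen 1 * M.gen 0 := by
    rw [show N.gen 1 = bN4 (0, true, false, false) by rw [bN4_eq]; simp [wm], FB]
    have := tpow_comm M.toFGCA0 m0 m1 m2 m3 (M.gen_mem 1) 1
    simp only [pow_one] at this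
    simp [wm, this]
  have hgen2 : FL (N.gen 2) = M.gen 2 * M.gen 0 := by
    rw [show N.gen 2 = bN4 (0, false, true, false) by rw [bN4_eq]; simp [wm], FB]
    have := tpow_comm M.toFGCA0 m0 m1 m2 m3 (M.gen_mem 2) 1
    simp only [pow_one] at this
    simp [wm, this]
  have hgen3 : FL (N.gen 3) = M.gen 3 * M.gen 0 ^ 2 := by
    rw [show N.gen 3 = bN4 (0, false, false, true) by rw [bN4_eq]; simp [wm], FB]
    have := tpow_comm M.toFGCA0 m0 m1 m2 m3 (M.gen_mem 3) 2
    simp [wm, this]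
  exact ⟨AlgHom.ofLinearMap FL hone hmul, hgen0, hgen1, hgen2, hgen3, hcomm⟩
end Fmap

/-- The DGA `(ℚ[t] ⊗ Λ(x,y,z), D₁)` with `|t| = 2`,
`|x| = 3`, `|y| = 5`, `|z| = 7`, `D₁t = D₁x = D₁y = 0`, `D₁z = xy + t⁴` has
finite-dimensional cohomology; the DGA `(ℚ[t] ⊗ Λ(x',y',z'), D₂)` with
`|t| = 2`, `|x'| = 5`, `|y'| = 7`, `|z'| = 11`, `D₂t = D₂x' = D₂y' = 0`,
`D₂z' = x'y' + t⁶` has finite-dimensional cohomology; and the `ℚ[t]`-algebra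
map `F` with `F x' = xt`, `F y' = yt`, `F z' = zt²` is a map of DGAs
`(ℚ[t] ⊗ Λ(x',y',z'), D₂) → (ℚ[t] ⊗ Λ(x,y,z), D₁)`. -/
theorem statement6 (A B : Type) [Ring A] [Algebra ℚ A] [Ring B] [Algebra ℚ B]
    (M : FGCA (Fin 4) ![2, 3, 5, 7] A)
    (hMt : M.D (M.gen 0) = 0) (hMx : M.D (M.gen 1) = 0) (hMy : M.D (M.gen 2) = 0)
    (hMz : M.D (M.gen 3) = M.gen 1 * M.gen 2 + M.gen 0 ^ 4)
    (N : FGCA (Fin 4) ![2, 5, 7, 11] B)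
    (hNt : N.D (N.gen 0) = 0) (hNx : N.D (N.gen 1) = 0) (hNy : N.D (N.gen 2) = 0)
    (hNz : N.D (N.gen 3) = N.gen 1 * N.gen 2 + N.gen 0 ^ 6) :
    FiniteCohomology M.D ∧ FiniteCohomology N.D ∧
    ∃ F : B →ₐ[ℚ] A, F (N.gen 0) = M.gen 0 ∧
      F (N.gen 1) = M.gen 1 * M.gen 0 ∧
      F (N.gen 2) = M.gen 2 * M.gen 0 ∧
      F (N.gen 3) = M.gen 3 * M.gen 0 ^ 2 ∧
      ∀ x, F (N.D x) = M.D (F x) := by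
  refine ⟨?_, ?_, ?_⟩
  · exact finite_cohomology_of_relations M (by decide) (by decide) (by decide) (by decide)
      4 hMt hMx hMy hMz
  · exact finite_cohomology_of_relations N (by decide) (by decide) (by decide) (by decide)
      6 hNt hNx hNy hNz
  · exact exists_F M N (by decide) (by decide) (by decide) (by decide)
      (by decide) (by decide) (by decide) (by decide) 4 hMt hMx hMy hMz hNt hNx hNy
      (by rw [hNz])
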